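/- arXiv:2410.20453 — 2 statements merged into one kernel-verified Lean document; each statement's English description precedes it below -/
import Mathlib

section
/- The L₁ norm of the Dirichlet kernel satisfies ‖D_n‖_{L₁(𝕋)} ≥ C log n for some absolute constant C > 0 and all n ≥ 2, where D_n(t) = Σ_{k=-n}^{n} e^{ikt}. -/
open MeasureTheory Finset
open scoped ENNReal

noncomputable section

instance : Fact (0 < 2 * Real.pi) := ⟨by positivity⟩

/-- Normalized Haar (probability) measure on `𝕋 = ℝ/2πℤ`. -/
def μ𝕋 : Measure (AddCircle (2 * Real.pi)) := AddCircle.haarAddCircle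

/-- The Dirichlet kernel `D_n(t) = ∑_{k=-n}^{n} e^{ikt}`. -/
def dirichletKernel (n : ℕ) (x : AddCircle (2 * Real.pi)) : ℂ :=
  ∑ k ∈ Finset.Icc (-(n : ℤ)) (n : ℤ), fourier k x

/-- Telescoping identity for the geometric-type sum `∑_{k=-n}^n w^{2k}`. -/
lemma tele_aux (w : ℂ) (hw : w ≠ 0) (n : ℕ) :
    (∑ k ∈ Finset.Icc (-(n:ℤ)) (n:ℤ), w ^ (2*k)) * (w⁻¹ - w)
      = (w ^ (2*n+1))⁻¹ - w ^ (2*n+1) := by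
  induction n with
  | zero => simp
  | succ m ih =>
    have h1 : Finset.Icc (-(m+1:ℤ)) ((m:ℤ)+1)
        = insert (-((m:ℤ)+1)) (insert ((m:ℤ)+1) (Finset.Icc (-(m:ℤ)) (m:ℤ))) := by
      ext x; simp; omega
    have h2 : -((m:ℤ)+1) ∉ insert ((m:ℤ)+1) (Finset.Icc (-(m:ℤ)) (m:ℤ)) := by
      simp; omega
    have h3 : ((m:ℤ)+1) ∉ Finset.Icc (-(m:ℤ)) (m:ℤ) := by simp
    have e1 : w ^ ((2:ℤ)*(-((m:ℤ)+1))) = (w^(2*m+2 : ℕ))⁻¹ := by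
      rw [show (2:ℤ)*(-((m:ℤ)+1)) = -((2*m+2 : ℕ):ℤ) by push_cast; ring,
        zpow_neg, zpow_natCast]
    have e2 : w ^ ((2:ℤ)*(((m:ℤ))+1)) = w^(2*m+2 : ℕ) := by
      rw [show (2:ℤ)*(((m:ℤ))+1) = ((2*m+2 : ℕ):ℤ) by push_cast; ring, zpow_natCast]
    push_cast
    rw [h1, Finset.sum_insert h2, Finset.sum_insert h3, e1, e2, add_mul, add_mul, ih]
    field_simp
    ring

open Complex in
/-- The classical closed form: `D_n(t) · sin(t/2) = sin((n + 1/2) t)`. -/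
lemma dk_mul_sin (n : ℕ) (t : ℝ) :
    dirichletKernel n ↑t * Complex.sin (t / 2) = Complex.sin (((n:ℂ) + 1/2) * t) := by
  set w : ℂ := Complex.exp ((t:ℂ)/2 * I) with hwdef
  have hw : w ≠ 0 := Complex.exp_ne_zero _
  have hfour : ∀ k : ℤ, (fourier k (↑t : AddCircle (2*Real.pi)) : ℂ) = w ^ (2*k) := by
    intro k
    rw [fourier_coe_apply, hwdef, ← Complex.exp_int_mul]
    congr 1
    have hπ : (Real.pi : ℂ) ≠ 0 := by simpa using Real.pi_ne_zero
    push_cast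
    field_simp
  have hsin1 : Complex.sin ((t:ℂ)/2) = (w⁻¹ - w) * I / 2 := by
    rw [Complex.sin, hwdef, ← Complex.exp_neg]
    ring_nf
  have hsin2 : Complex.sin (((n:ℂ) + 1/2) * t) = ((w^(2*n+1))⁻¹ - w^(2*n+1)) * I / 2 := by
    have hp : Complex.exp ((t:ℂ)/2 * I) ^ (2*n+1) = Complex.exp (((n:ℂ) + 1/2) * t * I) := by
      rw [← Complex.exp_nat_mul]; congr 1; push_cast; ring
    rw [Complex.sin, hwdef, hp, ← Complex.exp_neg]
    congr 3
    rw [neg_mul]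
  rw [hsin1, hsin2, dirichletKernel]
  simp_rw [hfour]
  rw [show ∀ a b : ℂ, a * ((b) * I / 2) = a * b * I / 2 from by intros; ring]
  rw [tele_aux w hw n]

/-- Real absolute-value version of the closed form. -/
lemma abs_sin_eq (n : ℕ) (t : ℝ) :
    |Real.sin (((n:ℝ) + 1/2) * t)| = ‖dirichletKernel n ↑t‖ * |Real.sin (t/2)| := by
  have h := congrArg norm (dk_mul_sin n t)
  rw [norm_mul] at h
  rw [show ((t:ℂ)/2) = ((t/2 : ℝ) : ℂ) by push_cast; ring, ← Complex.ofReal_sin,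
    Complex.norm_real, Real.norm_eq_abs] at h
  rw [show (((n:ℂ) + 1/2) * t) = ((((n:ℝ)+1/2)*t : ℝ) : ℂ) by push_cast; ring,
    ← Complex.ofReal_sin, Complex.norm_real, Real.norm_eq_abs] at h
  rw [← h]

lemma dk_cont (n : ℕ) : Continuous fun t : ℝ => ‖dirichletKernel n (↑t)‖ := by
  apply Continuous.norm
  exact (continuous_finset_sum _ fun k _ => (fourier k).continuous).comp
    (AddCircle.continuous_mk' _)

/-- The Haar integral is `(2π)⁻¹` times the interval integral of the lift. -/
lemma haar_int (n : ℕ) :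
    ∫ x, ‖dirichletKernel n x‖ ∂μ𝕋
      = (2*Real.pi)⁻¹ * ∫ t in (0:ℝ)..(2*Real.pi), ‖dirichletKernel n ↑t‖ := by
  have h := AddCircle.intervalIntegral_preimage (2*Real.pi) 0
    (fun x => ‖dirichletKernel n x‖)
  rw [zero_add] at h
  rw [AddCircle.volume_eq_smul_haarAddCircle, integral_smul_measure,
    ENNReal.toReal_ofReal (by positivity)] at h
  rw [μ𝕋, h, smul_eq_mul, ← mul_assoc, inv_mul_cancel₀ (by positivity), one_mul]

set_option maxHeartbeats 1000000 in
/-- The integral of `‖D_n‖` over `[iπ/N, (i+1)π/N]`, `N = n + 1/2`, is at least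
`4/((i+1)π)`. -/
lemma piece (n i : ℕ) {N : ℝ} (hNdef : N = (n:ℝ) + 1/2) :
    4/(((i:ℝ)+1)*Real.pi) ≤
    ∫ t in ((i:ℝ)*Real.pi/N)..(((i:ℝ)+1)*Real.pi/N), ‖dirichletKernel n ↑t‖ := by
  have hπ : (0:ℝ) < Real.pi := Real.pi_pos
  have hN : (0:ℝ) < N := by rw [hNdef]; positivity
  have hab : (i:ℝ)*Real.pi/N ≤ ((i:ℝ)+1)*Real.pi/N := by
    apply div_le_div_of_nonneg_right ?_ hN.le
    nlinarith
  have hpt : ∀ t ∈ Set.Icc ((i:ℝ)*Real.pi/N) (((i:ℝ)+1)*Real.pi/N),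
      2*N/(((i:ℝ)+1)*Real.pi) * |Real.sin (N*t)| ≤ ‖dirichletKernel n ↑t‖ := by
    intro t ht
    have ht0 : 0 ≤ t := le_trans (by positivity) ht.1
    have h1 : |Real.sin (N*t)| ≤ ‖dirichletKernel n ↑t‖ * (t/2) := by
      rw [hNdef, abs_sin_eq n t]
      exact mul_le_mul_of_nonneg_left
        ((Real.abs_sin_le_abs).trans_eq (abs_of_nonneg (by linarith))) (norm_nonneg _)
    have h2 : N * t ≤ ((i:ℝ)+1)*Real.pi := by
      have h := ht.2
      rw [le_div_iff₀ hN] at h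
      calc N*t = t*N := mul_comm _ _
        _ ≤ _ := h
    have hD : 0 ≤ ‖dirichletKernel n ↑t‖ := norm_nonneg _
    rw [div_mul_eq_mul_div, div_le_iff₀ (by positivity)]
    nlinarith [abs_nonneg (Real.sin (N*t))]
  have hint1 : IntervalIntegrable (fun t : ℝ => ‖dirichletKernel n ↑t‖) volume
      ((i:ℝ)*Real.pi/N) (((i:ℝ)+1)*Real.pi/N) := (dk_cont n).intervalIntegrable _ _
  have hint2 : IntervalIntegrable (fun t : ℝ => 2*N/(((i:ℝ)+1)*Real.pi) * |Real.sin (N*t)|)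
      volume ((i:ℝ)*Real.pi/N) (((i:ℝ)+1)*Real.pi/N) := by
    apply Continuous.intervalIntegrable; continuity
  have hmono := intervalIntegral.integral_mono_on hab hint2 hint1 hpt
  have hcomp : ∫ t in ((i:ℝ)*Real.pi/N)..(((i:ℝ)+1)*Real.pi/N), Real.sin (N*t)
      = N⁻¹ • ∫ x in (N*((i:ℝ)*Real.pi/N))..(N*(((i:ℝ)+1)*Real.pi/N)), Real.sin x :=
    intervalIntegral.integral_comp_mul_left Real.sin hN.ne'
  have hNa : N*((i:ℝ)*Real.pi/N) = (i:ℝ)*Real.pi := by field_simp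
  have hNb : N*(((i:ℝ)+1)*Real.pi/N) = ((i:ℝ)+1)*Real.pi := by field_simp
  have hval : ∫ t in ((i:ℝ)*Real.pi/N)..(((i:ℝ)+1)*Real.pi/N), Real.sin (N*t)
      = N⁻¹ * (2 * Real.cos ((i:ℝ)*Real.pi)) := by
    rw [hcomp, hNa, hNb, integral_sin, smul_eq_mul]
    congr 1
    rw [add_mul, one_mul, Real.cos_add_pi]
    ring
  have habs : |∫ t in ((i:ℝ)*Real.pi/N)..(((i:ℝ)+1)*Real.pi/N), Real.sin (N*t)| = 2/N := by
    rw [hval, abs_mul, abs_mul, abs_of_nonneg (by positivity : (0:ℝ) ≤ N⁻¹),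
      abs_of_nonneg (by norm_num : (0:ℝ) ≤ 2),
      show ((i:ℝ)*Real.pi) = ((i:ℤ):ℝ)*Real.pi by push_cast; ring,
      Real.abs_cos_int_mul_pi]
    ring
  have hsint : 2/N ≤ ∫ t in ((i:ℝ)*Real.pi/N)..(((i:ℝ)+1)*Real.pi/N), |Real.sin (N*t)| := by
    rw [← habs]
    exact intervalIntegral.abs_integral_le_integral_abs hab
  calc 4/(((i:ℝ)+1)*Real.pi) = 2*N/(((i:ℝ)+1)*Real.pi) * (2/N) := by
        rw [div_mul_div_comm]; rw [div_eq_div_iff (by positivity) (by positivity)]; ring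
    _ ≤ 2*N/(((i:ℝ)+1)*Real.pi) * ∫ t in ((i:ℝ)*Real.pi/N)..(((i:ℝ)+1)*Real.pi/N),
          |Real.sin (N*t)| := mul_le_mul_of_nonneg_left hsint (by positivity)
    _ = ∫ t in ((i:ℝ)*Real.pi/N)..(((i:ℝ)+1)*Real.pi/N),
          2*N/(((i:ℝ)+1)*Real.pi) * |Real.sin (N*t)| := by
        rw [intervalIntegral.integral_const_mul]
    _ ≤ _ := hmono

set_option maxHeartbeats 1000000 in
/-- **Lower bound for the Lebesgue constants.** There is an absolute constant `C > 0`
such that `‖D_n‖_{L₁(𝕋)} ≥ C · log n` for all `n ≥ 2`. -/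
theorem dirichletKernel_L1_norm_lower_bound :
    ∃ C : ℝ, 0 < C ∧ ∀ n : ℕ, 2 ≤ n →
      C * Real.log n ≤ ∫ x, ‖dirichletKernel n x‖ ∂μ𝕋 := by
  have hπ : (0:ℝ) < Real.pi := Real.pi_pos
  refine ⟨2/Real.pi^2, by positivity, ?_⟩
  intro n hn
  set N : ℝ := (n:ℝ) + 1/2 with hNdef
  have hN : (0:ℝ) < N := by positivity
  set a : ℕ → ℝ := fun k => (k:ℝ)*Real.pi/N with hadef
  have ha0 : a 0 = 0 := by simp [hadef]
  have hint : ∀ k, k < n → IntervalIntegrable (fun t : ℝ => ‖dirichletKernel n ↑t‖)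
      volume (a k) (a (k+1)) := fun k _ => (dk_cont n).intervalIntegrable _ _
  have hadj := intervalIntegral.sum_integral_adjacent_intervals
    (f := fun t : ℝ => ‖dirichletKernel n ↑t‖) (μ := volume) (a := a) hint
  have hpieces : ∀ i ∈ Finset.range n,
      4/(((i:ℝ)+1)*Real.pi) ≤ ∫ t in a i..a (i+1), ‖dirichletKernel n ↑t‖ := by
    intro i _
    have h := piece n i hNdef
    have e : a (i+1) = ((i:ℝ)+1)*Real.pi/N := by rw [hadef]; push_cast; ring_nf
    rw [ha0] at *
    rw [e]
    exact h
  have hsum : ∑ i ∈ Finset.range n, 4/(((i:ℝ)+1)*Real.pi)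
      ≤ ∫ t in (a 0)..(a n), ‖dirichletKernel n ↑t‖ := by
    rw [← hadj]
    exact Finset.sum_le_sum hpieces
  have han : a n ≤ 2*Real.pi := by
    rw [hadef]
    dsimp only
    rw [div_le_iff₀ hN, hNdef]
    nlinarith [Nat.cast_nonneg (α := ℝ) n, Real.pi_pos,
      mul_nonneg (Nat.cast_nonneg (α := ℝ) n) Real.pi_pos.le]
  have h0an : a 0 ≤ a n := by
    rw [ha0, hadef]; positivity
  have hbig : ∫ t in (a 0)..(a n), ‖dirichletKernel n ↑t‖
      ≤ ∫ t in (0:ℝ)..(2*Real.pi), ‖dirichletKernel n ↑t‖ := by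
    rw [ha0] at *
    exact intervalIntegral.integral_mono_interval le_rfl h0an han
      (ae_of_all _ fun x => norm_nonneg _) ((dk_cont n).intervalIntegrable _ _)
  -- harmonic sum lower bound
  have hlog : Real.log n ≤ ∑ i ∈ Finset.range n, ((i:ℝ)+1)⁻¹ := by
    have h1 : Real.log (n:ℝ) ≤ Real.log ((n:ℝ)+1) :=
      Real.log_le_log (by positivity) (by linarith)
    have h2 := log_add_one_le_harmonic n
    have h3 : ((harmonic n : ℚ) : ℝ) = ∑ i ∈ Finset.range n, ((i:ℝ)+1)⁻¹ := by
      rw [harmonic]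
      push_cast
      rfl
    rw [h3] at h2
    refine h1.trans ?_
    refine le_trans (le_of_eq ?_) h2
    push_cast
    ring_nf
  have hsum2 : (4/Real.pi) * Real.log n ≤ ∑ i ∈ Finset.range n, 4/(((i:ℝ)+1)*Real.pi) := by
    have e : ∑ i ∈ Finset.range n, 4/(((i:ℝ)+1)*Real.pi)
        = (4/Real.pi) * ∑ i ∈ Finset.range n, ((i:ℝ)+1)⁻¹ := by
      rw [Finset.mul_sum]
      refine Finset.sum_congr rfl fun i _ => ?_
      field_simp
    rw [e]
    exact mul_le_mul_of_nonneg_left hlog (by positivity)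
  rw [haar_int n]
  calc 2/Real.pi^2 * Real.log n = (2*Real.pi)⁻¹ * ((4/Real.pi) * Real.log n) := by
        field_simp; ring
    _ ≤ (2*Real.pi)⁻¹ * ∫ t in (0:ℝ)..(2*Real.pi), ‖dirichletKernel n ↑t‖ := by
        apply mul_le_mul_of_nonneg_left _ (by positivity)
        exact hsum2.trans (hsum.trans hbig)
end
end

section
/- Let r > 1/2 and γ = r/(r − 1/2). With m_s = ⌊2^{l(r+1/2)} 2^{-s(r−1/2)}⌋ + 1 for l ≤ s ≤ ⌊γl⌋, one has Σ_{s=l}^{⌊γl⌋} (2^s/m_s · log(2^s/m_s + 1))^{1/2} · 2^{-sr} ≤ C · 2^{-lr} for a constant C depending only on r. -/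
open Finset

private lemma I5_term_bound (r : ℝ) (hr : 1 / 2 < r) (l s : ℕ) (hls : l ≤ s) :
    ((2 : ℝ) ^ (s : ℝ) /
        ((⌊(2 : ℝ) ^ ((l : ℝ) * (r + 1 / 2)) * 2 ^ (-(s : ℝ) * (r - 1 / 2))⌋₊ : ℝ) + 1) *
      Real.logb 2
        ((2 : ℝ) ^ (s : ℝ) /
            ((⌊(2 : ℝ) ^ ((l : ℝ) * (r + 1 / 2)) *
                2 ^ (-(s : ℝ) * (r - 1 / 2))⌋₊ : ℝ) + 1) + 1)) ^ ((1 : ℝ) / 2) *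
      2 ^ (-(s : ℝ) * r) ≤
    (2 : ℝ) ^ (-(l : ℝ) * r) *
      (((r + 1/2) * ((s : ℝ) - l) + 1) *
        (((2 : ℝ) ^ (-((r - 1/2)/2))) ^ ((s : ℝ) - (l : ℝ)) : ℝ)) := by
  have h2 : (0:ℝ) < 2 := by norm_num
  set A : ℝ := (2 : ℝ) ^ ((l : ℝ) * (r + 1 / 2)) * 2 ^ (-(s : ℝ) * (r - 1 / 2)) with hAdef
  have hA : 0 < A := by
    apply mul_pos <;> exact Real.rpow_pos_of_pos h2 _
  set M : ℝ := (⌊A⌋₊ : ℝ) + 1 with hMdef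
  have hAM : A < M := Nat.lt_floor_add_one A
  have hM : 0 < M := hA.trans hAM
  set R : ℝ := (2 : ℝ) ^ (s : ℝ) / M with hRdef
  have hR0 : 0 ≤ R := by positivity
  set k : ℝ := (s : ℝ) - l with hkdef
  have hk0 : 0 ≤ k := by
    simp only [hkdef, sub_nonneg]
    exact_mod_cast hls
  have ha : (0:ℝ) < r + 1/2 := by linarith
  set B : ℝ := (2 : ℝ) ^ (k * (r + 1/2)) with hBdef
  have hB0 : 0 < B := Real.rpow_pos_of_pos h2 _
  have hB1 : 1 ≤ B := Real.one_le_rpow (by norm_num) (by positivity)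
  have hA_eq : A = (2 : ℝ) ^ ((l : ℝ) * (r + 1 / 2) + (-(s : ℝ)) * (r - 1 / 2)) := by
    rw [hAdef, Real.rpow_add h2]
  have hRB : R ≤ B := by
    have h1 : R ≤ (2 : ℝ) ^ (s : ℝ) / A :=
      div_le_div_of_nonneg_left (by positivity) hA hAM.le
    have h2' : (2 : ℝ) ^ (s : ℝ) / A = B := by
      rw [hA_eq, ← Real.rpow_sub h2, hBdef]
      congr 1
      rw [hkdef]; ring
    linarith [h1, h2'.le]
  have hlog : Real.logb 2 (R + 1) ≤ 1 + k * (r + 1/2) := by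
    have h1 : R + 1 ≤ 2 * B := by linarith
    have h2' : Real.logb 2 (R + 1) ≤ Real.logb 2 (2 * B) :=
      Real.logb_le_logb_of_le (by norm_num) (by linarith) h1
    have h3 : Real.logb 2 (2 * B) = 1 + k * (r + 1/2) := by
      rw [Real.logb_mul (by norm_num) (ne_of_gt hB0), Real.logb_self_eq_one (by norm_num),
        hBdef, Real.logb_rpow (by norm_num)]
      norm_num
    linarith [h2', h3.le]
  have hlog0 : 0 ≤ Real.logb 2 (R + 1) := Real.logb_nonneg (by norm_num) (by linarith)
  have hinner : R * Real.logb 2 (R + 1) ≤ B * (1 + k * (r + 1/2)) := by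
    apply mul_le_mul hRB hlog hlog0 hB0.le
  have hP1 : (1:ℝ) ≤ 1 + k * (r + 1/2) := by nlinarith
  have hstep1 : (R * Real.logb 2 (R + 1)) ^ ((1:ℝ)/2) ≤
      (B * (1 + k * (r + 1/2))) ^ ((1:ℝ)/2) :=
    Real.rpow_le_rpow (by positivity) hinner (by norm_num)
  have hstep2 : (B * (1 + k * (r + 1/2))) ^ ((1:ℝ)/2) ≤
      B ^ ((1:ℝ)/2) * (1 + k * (r + 1/2)) := by
    rw [Real.mul_rpow hB0.le (by linarith)]
    apply mul_le_mul_of_nonneg_left _ (by positivity)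
    calc (1 + k * (r + 1/2)) ^ ((1:ℝ)/2) ≤ (1 + k * (r + 1/2)) ^ (1:ℝ) :=
          Real.rpow_le_rpow_of_exponent_le hP1 (by norm_num)
      _ = _ := Real.rpow_one _
  have hBhalf : B ^ ((1:ℝ)/2) = (2:ℝ) ^ (k * (r + 1/2) * (1/2)) := by
    rw [hBdef, ← Real.rpow_mul h2.le]
  have hxk : ((2 : ℝ) ^ (-((r - 1/2)/2)) : ℝ) ^ k = (2:ℝ) ^ (-((r - 1/2)/2) * k) :=
    (Real.rpow_mul h2.le _ _).symm
  have key : B ^ ((1:ℝ)/2) * 2 ^ (-(s : ℝ) * r) =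
      (2 : ℝ) ^ (-(l : ℝ) * r) * ((2 : ℝ) ^ (-((r - 1/2)/2)) : ℝ) ^ k := by
    rw [hBhalf, hxk, ← Real.rpow_add h2, ← Real.rpow_add h2]
    congr 1
    rw [hkdef]; ring
  calc (R * Real.logb 2 (R + 1)) ^ ((1:ℝ)/2) * 2 ^ (-(s : ℝ) * r)
      ≤ (B ^ ((1:ℝ)/2) * (1 + k * (r + 1/2))) * 2 ^ (-(s : ℝ) * r) := by
        apply mul_le_mul_of_nonneg_right (hstep1.trans hstep2) (by positivity)
    _ = (B ^ ((1:ℝ)/2) * 2 ^ (-(s : ℝ) * r)) * (1 + k * (r + 1/2)) := by ring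
    _ = (2 : ℝ) ^ (-(l : ℝ) * r) *
          (((r + 1/2) * k + 1) * ((2 : ℝ) ^ (-((r - 1/2)/2)) : ℝ) ^ k) := by
        rw [key]; ring

/-- **Estimate (n29) of the term `I₅` in the proof of Theorem 3.**
For `r > 1/2`, `γ = r/(r-1/2)` and `m_s = ⌊2^{l(r+1/2)} 2^{-s(r-1/2)}⌋ + 1`
(`l ≤ s ≤ ⌊γl⌋`), one has
`∑_{s=l}^{⌊γl⌋} (2^s/m_s · log₂(2^s/m_s + 1))^{1/2} · 2^{-sr} ≤ C · 2^{-lr}`. -/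
theorem I5_estimate_theorem3
    (r γ : ℝ) (hr : 1 / 2 < r) (hγ : γ = r / (r - 1 / 2)) :
    ∃ C : ℝ, 0 < C ∧ ∀ l : ℕ, 1 ≤ l →
      (∑ s ∈ Finset.Icc l ⌊γ * l⌋₊,
        ((2 : ℝ) ^ (s : ℝ) /
            ((⌊(2 : ℝ) ^ ((l : ℝ) * (r + 1 / 2)) * 2 ^ (-(s : ℝ) * (r - 1 / 2))⌋₊ : ℝ) + 1) *
          Real.logb 2
            ((2 : ℝ) ^ (s : ℝ) /
                ((⌊(2 : ℝ) ^ ((l : ℝ) * (r + 1 / 2)) *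
                    2 ^ (-(s : ℝ) * (r - 1 / 2))⌋₊ : ℝ) + 1) + 1)) ^ ((1 : ℝ) / 2) *
          2 ^ (-(s : ℝ) * r)) ≤
      C * 2 ^ (-(l : ℝ) * r) := by
  have h2 : (0:ℝ) < 2 := by norm_num
  set x : ℝ := (2 : ℝ) ^ (-((r - 1/2)/2)) with hxdef
  have hx0 : 0 < x := Real.rpow_pos_of_pos h2 _
  have hx1 : x < 1 := Real.rpow_lt_one_of_one_lt_of_neg (by norm_num) (by linarith)
  set g : ℕ → ℝ := fun n => ((r + 1/2) * n + 1) * x ^ n with hgdef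
  have hgnn : ∀ n, 0 ≤ g n := by
    intro n
    have : (0:ℝ) ≤ (r + 1/2) * n + 1 := by positivity
    positivity
  have hsum : Summable g := by
    have h1 : Summable (fun n : ℕ => (n:ℝ) ^ 1 * x ^ n) :=
      summable_pow_mul_geometric_of_norm_lt_one 1
        (by rw [Real.norm_eq_abs, abs_of_pos hx0]; exact hx1)
    have h2' : Summable (fun n : ℕ => x ^ n) := summable_geometric_of_lt_one hx0.le hx1
    have := (h1.mul_left (r + 1/2)).add h2'
    apply this.congr
    intro n
    simp [hgdef]; ring
  refine ⟨∑' n, g n, ?_, ?_⟩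
  · have h0 : g 0 ≤ ∑' n, g n := Summable.le_tsum hsum 0 (fun i _ => hgnn i)
    have : g 0 = 1 := by simp [hgdef]
    linarith
  · intro l hl
    calc (∑ s ∈ Finset.Icc l ⌊γ * l⌋₊,
        ((2 : ℝ) ^ (s : ℝ) /
            ((⌊(2 : ℝ) ^ ((l : ℝ) * (r + 1 / 2)) * 2 ^ (-(s : ℝ) * (r - 1 / 2))⌋₊ : ℝ) + 1) *
          Real.logb 2
            ((2 : ℝ) ^ (s : ℝ) /
                ((⌊(2 : ℝ) ^ ((l : ℝ) * (r + 1 / 2)) *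
                    2 ^ (-(s : ℝ) * (r - 1 / 2))⌋₊ : ℝ) + 1) + 1)) ^ ((1 : ℝ) / 2) *
          2 ^ (-(s : ℝ) * r))
        ≤ ∑ s ∈ Finset.Icc l ⌊γ * l⌋₊,
            (2 : ℝ) ^ (-(l : ℝ) * r) * g (s - l) := by
          apply Finset.sum_le_sum
          intro s hs
          have hls : l ≤ s := (Finset.mem_Icc.mp hs).1
          have := I5_term_bound r hr l s hls
          have hcast : ((s - l : ℕ) : ℝ) = (s : ℝ) - l := by
            rw [Nat.cast_sub hls]
          calc _ ≤ (2 : ℝ) ^ (-(l : ℝ) * r) *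
              (((r + 1/2) * ((s : ℝ) - l) + 1) *
                (((2 : ℝ) ^ (-((r - 1/2)/2))) ^ ((s : ℝ) - (l : ℝ)) : ℝ)) := this
            _ = (2 : ℝ) ^ (-(l : ℝ) * r) * g (s - l) := by
                rw [hgdef]
                simp only [hxdef]
                rw [← hcast, Real.rpow_natCast]
      _ = (2 : ℝ) ^ (-(l : ℝ) * r) * ∑ s ∈ Finset.Icc l ⌊γ * l⌋₊, g (s - l) := by
          rw [Finset.mul_sum]
      _ ≤ (2 : ℝ) ^ (-(l : ℝ) * r) * ∑' n, g n := by
          apply mul_le_mul_of_nonneg_left _ (by positivity)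
          rw [← Finset.Ico_add_one_right_eq_Icc, Finset.sum_Ico_eq_sum_range]
          have heq : ∀ i ∈ Finset.range (⌊γ * l⌋₊ + 1 - l), g (l + i - l) = g i := by
            intro i _; congr 1; omega
          rw [Finset.sum_congr rfl heq]
          exact Summable.sum_le_tsum _ (fun i _ => hgnn i) hsum
      _ = (∑' n, g n) * 2 ^ (-(l : ℝ) * r) := by ring
end
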